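/- Let $V$ be a countable set and $G=(V,E)$ a connected graph. Let $w: V \to \mathbb{R}^+$ satisfy $\sum_{x \in V} w_x = 1$. For all distinct $x,y \in V$ fix a path $\gamma_{xy}=\gamma_{yx}$ of length $m_{xy}$ joining $x$ and $y$, and define $\bar{w}: V \to \mathbb{R}^+$ by $\bar{w}_z := \sum_{\{x,y\}: z \in \gamma_{xy}} m_{xy} w_x w_y$. Then for every $u: V \to \mathbb{C}$ with $\sum_{x\in V} w_x u_x = 0$ one has $\sum_{x \in V} w_x |u_x|^2 \leq \sum_{z \in V} \bar{w}_z |\nabla u|_z^2$, where $|\nabla u|_z^2 := \sum_{y: \{z,y\} \in E} |u_z - u_y|^2$. -/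

import Mathlib

open scoped BigOperators

lemma walk_bound {V : Type*} [DecidableEq V] (E : V → V → Prop) (u : V → ℂ) (gradsq : V → ℝ)
    (hgradnn : ∀ z, 0 ≤ gradsq z)
    (hstep : ∀ a b, E a b → ‖u a - u b‖ ^ 2 ≤ gradsq a) :
    ∀ n : ℕ, ∀ f : ℕ → V, (∀ i < n, E (f i) (f (i + 1))) →
      ‖u (f 0) - u (f n)‖ ^ 2 ≤ (n : ℝ) * ∑ z ∈ (Finset.Iic n).image f, gradsq z := by
  intro n
  induction n using Nat.strong_induction_on with
  | _ n IH =>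
  intro f hf
  by_cases hinj : Set.InjOn f (Set.Iic n)
  · -- injective case
    have htel : u (f 0) - u (f n) = ∑ i ∈ Finset.range n, (u (f i) - u (f (i + 1))) :=
      (Finset.sum_range_sub' (fun i => u (f i)) n).symm
    have h1 : ‖u (f 0) - u (f n)‖ ^ 2
        ≤ (∑ i ∈ Finset.range n, ‖u (f i) - u (f (i + 1))‖) ^ 2 := by
      rw [htel]
      have := norm_sum_le (Finset.range n) (fun i => u (f i) - u (f (i + 1)))
      exact pow_le_pow_left₀ (norm_nonneg _) this 2
    have h2 : (∑ i ∈ Finset.range n, ‖u (f i) - u (f (i + 1))‖) ^ 2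
        ≤ (n : ℝ) * ∑ i ∈ Finset.range n, ‖u (f i) - u (f (i + 1))‖ ^ 2 := by
      have := Finset.sum_mul_sq_le_sq_mul_sq (Finset.range n)
        (fun i => ‖u (f i) - u (f (i + 1))‖) (fun _ => (1 : ℝ))
      simp only [mul_one, one_pow, Finset.sum_const, Finset.card_range, nsmul_eq_mul] at this
      linarith [this]
    have h3 : ∑ i ∈ Finset.range n, ‖u (f i) - u (f (i + 1))‖ ^ 2
        ≤ ∑ i ∈ Finset.range n, gradsq (f i) := by
      apply Finset.sum_le_sum
      intro i hi
      exact hstep _ _ (hf i (Finset.mem_range.mp hi))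
    have h4 : ∑ i ∈ Finset.range n, gradsq (f i)
        = ∑ z ∈ (Finset.range n).image f, gradsq z := by
      rw [Finset.sum_image]
      intro a ha b hb hab
      exact hinj (Set.mem_Iic.mpr (le_of_lt (Finset.mem_range.mp ha)))
        (Set.mem_Iic.mpr (le_of_lt (Finset.mem_range.mp hb))) hab
    have h5 : ∑ z ∈ (Finset.range n).image f, gradsq z
        ≤ ∑ z ∈ (Finset.Iic n).image f, gradsq z := by
      apply Finset.sum_le_sum_of_subset_of_nonneg
      · apply Finset.image_subset_image
        intro k hk
        simp only [Finset.mem_range] at hk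
        simp only [Finset.mem_Iic]
        omega
      · intro z _ _; exact hgradnn z
    calc ‖u (f 0) - u (f n)‖ ^ 2
        ≤ (n : ℝ) * ∑ i ∈ Finset.range n, ‖u (f i) - u (f (i + 1))‖ ^ 2 := le_trans h1 h2
      _ ≤ (n : ℝ) * ∑ z ∈ (Finset.Iic n).image f, gradsq z := by
          apply mul_le_mul_of_nonneg_left _ (Nat.cast_nonneg n)
          exact le_trans h3 (le_of_eq h4 |>.trans h5)
  · -- non-injective case : shortcut the walk
    rw [Set.InjOn] at hinj
    push_neg at hinj
    obtain ⟨a, ha, b, hb, hab, hne⟩ := hinj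
    simp only [Set.mem_Iic] at ha hb
    -- get i < j ≤ n with f i = f j
    obtain ⟨i, j, hij, hjn, heq⟩ : ∃ i j, i < j ∧ j ≤ n ∧ f i = f j := by
      rcases lt_or_gt_of_ne hne with h | h
      · exact ⟨a, b, h, hb, hab⟩
      · exact ⟨b, a, h, ha, hab.symm⟩
    set d := j - i with hd
    set n' := n - d with hn'def
    have hd1 : 1 ≤ d := by omega
    have hin' : i ≤ n' := by omega
    have hn'd : n' + d = n := by omega
    have hn'lt : n' < n := by omega
    set g : ℕ → V := fun k => if k ≤ i then f k else f (k + d) with hg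
    have hg0 : g 0 = f 0 := by simp [hg]
    have hgn' : g n' = f n := by
      by_cases h : n' ≤ i
      · have h1 : n' = i := le_antisymm h hin'
        have h2 : j = n := by omega
        rw [hg]; simp only [h1, le_refl, if_pos]
        rw [heq, h2]
      · simp only [hg, if_neg h, hn'd]
    have hedge : ∀ k < n', E (g k) (g (k + 1)) := by
      intro k hk
      by_cases h1 : k + 1 ≤ i
      · simpa [hg, if_pos h1, if_pos (by omega : k ≤ i)] using hf k (by omega)
      · by_cases h2 : k ≤ i
        · have hki : k = i := by omega
          have hjlt : j < n := by omega
          have e1 : g k = f j := by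
            rw [hg]; simp only [hki, le_refl, if_pos]; exact heq
          have e2 : g (k + 1) = f (j + 1) := by
            rw [hg]; simp only [if_neg h1]
            congr 1; omega
          rw [e1, e2]
          exact hf j hjlt
        · have e1 : g k = f (k + d) := by rw [hg]; simp only [if_neg h2]
          have e2 : g (k + 1) = f (k + d + 1) := by
            rw [hg]; simp only [if_neg h1]
            congr 1; omega
          rw [e1, e2]
          exact hf (k + d) (by omega)
    have himg : (Finset.Iic n').image g ⊆ (Finset.Iic n).image f := by
      intro z hz
      obtain ⟨k, hk, hkz⟩ := Finset.mem_image.mp hz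
      simp only [Finset.mem_Iic] at hk
      by_cases h : k ≤ i
      · exact Finset.mem_image.mpr ⟨k, Finset.mem_Iic.mpr (by omega), by
          rw [← hkz, hg]; simp [if_pos h]⟩
      · exact Finset.mem_image.mpr ⟨k + d, Finset.mem_Iic.mpr (by omega), by
          rw [← hkz, hg]; simp [if_neg h]⟩
    have hIH := IH n' hn'lt g hedge
    rw [hg0, hgn'] at hIH
    calc ‖u (f 0) - u (f n)‖ ^ 2
        ≤ (n' : ℝ) * ∑ z ∈ (Finset.Iic n').image g, gradsq z := hIH
      _ ≤ (n : ℝ) * ∑ z ∈ (Finset.Iic n).image f, gradsq z := by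
          apply mul_le_mul (Nat.cast_le.mpr hn'lt.le)
            (Finset.sum_le_sum_of_subset_of_nonneg himg (fun z _ _ => hgradnn z))
            (Finset.sum_nonneg (fun z _ => hgradnn z)) (Nat.cast_nonneg n)
set_option maxHeartbeats 2000000 in
/-- Discrete Poincaré inequality on a connected graph (Lemma `disc` in the paper).
Connectedness is encoded by the given system of paths joining any two distinct vertices. -/
theorem stmt_0 {V : Type*} [Countable V]
    (E : V → V → Prop) (hEsymm : ∀ x y, E x y → E y x)
    (w : V → ℝ) (hwpos : ∀ x, 0 < w x) (hwsumm : Summable w) (hw1 : ∑' x, w x = 1)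
    (m : V → V → ℕ) (γ : V → V → ℕ → V)
    (hmsym : ∀ x y, m x y = m y x)
    (hγ0 : ∀ x y, x ≠ y → γ x y 0 = x)
    (hγend : ∀ x y, x ≠ y → γ x y (m x y) = y)
    (hγE : ∀ x y, x ≠ y → ∀ i < m x y, E (γ x y i) (γ x y (i + 1)))
    (hγsym : ∀ x y, γ x y '' Set.Iic (m x y) = γ y x '' Set.Iic (m y x))
    (u : V → ℂ)
    (gradsq : V → ℝ)
    (hgrad : ∀ z, gradsq z = ∑' y, Set.indicator {y | E z y} (fun y => ‖u z - u y‖ ^ 2) y)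
    (hgradsumm : ∀ z, Summable (fun y =>
      Set.indicator {y | E z y} (fun y => ‖u z - u y‖ ^ 2) y))
    (barw : V → ℝ)
    (hbarw : ∀ z, barw z = (1 / 2) * ∑' p : V × V,
      Set.indicator {p : V × V | p.1 ≠ p.2 ∧ z ∈ γ p.1 p.2 '' Set.Iic (m p.1 p.2)}
        (fun p => (m p.1 p.2 : ℝ) * w p.1 * w p.2) p)
    (hbarwsumm : ∀ z, Summable (fun p : V × V =>
      Set.indicator {p : V × V | p.1 ≠ p.2 ∧ z ∈ γ p.1 p.2 '' Set.Iic (m p.1 p.2)}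
        (fun p => (m p.1 p.2 : ℝ) * w p.1 * w p.2) p))
    (husumm : Summable (fun x => (w x : ℂ) * u x))
    (hmean : ∑' x, (w x : ℂ) * u x = 0)
    (hlhs : Summable (fun x => w x * ‖u x‖ ^ 2))
    (hrhs : Summable (fun z => barw z * gradsq z)) :
    ∑' x, w x * ‖u x‖ ^ 2 ≤ ∑' z, barw z * gradsq z := by
  classical
  -- basic positivity facts
  have hgradnn : ∀ z, 0 ≤ gradsq z := by
    intro z
    rw [hgrad z]
    exact tsum_nonneg (fun y => Set.indicator_nonneg (fun _ _ => sq_nonneg _) _)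
  have hstep : ∀ a b, E a b → ‖u a - u b‖ ^ 2 ≤ gradsq a := by
    intro a b hab
    rw [hgrad a]
    have h := Summable.le_tsum (hgradsumm a) b
      (fun y _ => Set.indicator_nonneg (fun _ _ => sq_nonneg _) _)
    rwa [Set.indicator_of_mem (by exact hab : b ∈ {y | E a y})] at h
  -- norm expansion
  have hnorm : ∀ a b : ℂ, ‖a - b‖ ^ 2
      = ‖a‖ ^ 2 + ‖b‖ ^ 2 - 2 * ((starRingEnd ℂ) a * b).re := by
    intro a b
    simp only [Complex.sq_norm, Complex.normSq_apply, Complex.sub_re,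
      Complex.sub_im, Complex.mul_re, Complex.mul_im, Complex.conj_re, Complex.conj_im]
    ring
  -- summability of the three pieces
  have hwnn : ∀ x, (0:ℝ) ≤ w x := fun x => (hwpos x).le
  have hlhsnn : ∀ x, (0:ℝ) ≤ w x * ‖u x‖ ^ 2 := fun x => mul_nonneg (hwnn x) (sq_nonneg _)
  have hf1 : Summable (fun p : V × V => (w p.1 * ‖u p.1‖ ^ 2) * w p.2) :=
    hlhs.mul_of_nonneg hwsumm hlhsnn hwnn
  have hf2 : Summable (fun p : V × V => w p.1 * (w p.2 * ‖u p.2‖ ^ 2)) :=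
    hwsumm.mul_of_nonneg hlhs hwnn hlhsnn
  have hvnorm : Summable (fun x => ‖(w x : ℂ) * u x‖) := husumm.norm
  have hg3 : Summable (fun p : V × V =>
      (starRingEnd ℂ) ((w p.1 : ℂ) * u p.1) * ((w p.2 : ℂ) * u p.2)) := by
    apply Summable.of_norm
    have h := hvnorm.mul_of_nonneg hvnorm (fun x => norm_nonneg _) (fun x => norm_nonneg _)
    exact h.congr (fun p => by rw [norm_mul (((starRingEnd ℂ) ((w p.1 : ℂ) * u p.1))), RCLike.norm_conj])
  have hf3 : Summable (fun p : V × V =>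
      ((starRingEnd ℂ) ((w p.1 : ℂ) * u p.1) * ((w p.2 : ℂ) * u p.2)).re) := by
    exact (Complex.hasSum_re hg3.hasSum).summable
  -- sum of the cross terms is zero
  have hg3sum : ∑' p : V × V,
      (starRingEnd ℂ) ((w p.1 : ℂ) * u p.1) * ((w p.2 : ℂ) * u p.2) = 0 := by
    rw [Summable.tsum_prod hg3]
    have h : ∀ x : V, ∑' y, (starRingEnd ℂ) ((w x : ℂ) * u x) * ((w y : ℂ) * u y) = 0 := by
      intro x
      rw [tsum_mul_left, hmean, mul_zero]
    rw [tsum_congr h, tsum_zero]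
  have hf3sum : ∑' p : V × V,
      ((starRingEnd ℂ) ((w p.1 : ℂ) * u p.1) * ((w p.2 : ℂ) * u p.2)).re = 0 := by
    have h := (Complex.re_tsum hg3).symm
    rw [hg3sum] at h
    simpa using h
  -- pointwise expansion of the quadratic form
  have hAeq : ∀ p : V × V, w p.1 * w p.2 * ‖u p.1 - u p.2‖ ^ 2
      = (w p.1 * ‖u p.1‖ ^ 2) * w p.2 + w p.1 * (w p.2 * ‖u p.2‖ ^ 2)
        - 2 * ((starRingEnd ℂ) ((w p.1 : ℂ) * u p.1) * ((w p.2 : ℂ) * u p.2)).re := by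
    intro p
    rw [hnorm]
    have hre : ((starRingEnd ℂ) ((w p.1 : ℂ) * u p.1) * ((w p.2 : ℂ) * u p.2)).re
        = w p.1 * w p.2 * ((starRingEnd ℂ) (u p.1) * u p.2).re := by
      simp only [map_mul, Complex.conj_ofReal, Complex.mul_re, Complex.mul_im,
        Complex.ofReal_re, Complex.ofReal_im, Complex.conj_re, Complex.conj_im]
      ring
    rw [hre]
    ring
  have hA : Summable (fun p : V × V => w p.1 * w p.2 * ‖u p.1 - u p.2‖ ^ 2) :=
    ((hf1.add hf2).sub (hf3.mul_left 2)).congr (fun p => (hAeq p).symm)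
  -- tsum of the quadratic form equals 2 * (∑' x, w x * ‖u x‖ ^ 2)
  have hf1sum : ∑' p : V × V, (w p.1 * ‖u p.1‖ ^ 2) * w p.2 = (∑' x, w x * ‖u x‖ ^ 2) := by
    rw [Summable.tsum_prod hf1]
    have h : ∀ x : V, ∑' y, (w x * ‖u x‖ ^ 2) * w y = w x * ‖u x‖ ^ 2 := by
      intro x; rw [tsum_mul_left, hw1, mul_one]
    rw [tsum_congr h]
  have hf2sum : ∑' p : V × V, w p.1 * (w p.2 * ‖u p.2‖ ^ 2) = (∑' x, w x * ‖u x‖ ^ 2) := by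
    rw [Summable.tsum_prod hf2]
    have h : ∀ x : V, ∑' y, w x * (w y * ‖u y‖ ^ 2) = w x * (∑' x, w x * ‖u x‖ ^ 2) := by
      intro x; rw [tsum_mul_left]
    rw [tsum_congr h, tsum_mul_right, hw1, one_mul]
  have hAsum : ∑' p : V × V, w p.1 * w p.2 * ‖u p.1 - u p.2‖ ^ 2 = 2 * (∑' x, w x * ‖u x‖ ^ 2) := by
    rw [tsum_congr hAeq, Summable.tsum_sub (hf1.add hf2) (hf3.mul_left 2),
      Summable.tsum_add hf1 hf2, tsum_mul_left, hf1sum, hf2sum, hf3sum]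
    ring
  -- the double sum on the right-hand side
  have hHz : ∀ z, Summable (fun p : V × V =>
      Set.indicator {p : V × V | p.1 ≠ p.2 ∧ z ∈ γ p.1 p.2 '' Set.Iic (m p.1 p.2)}
        (fun p => (m p.1 p.2 : ℝ) * w p.1 * w p.2) p * gradsq z) :=
    fun z => (hbarwsumm z).mul_right _
  have hMnn : ∀ z, ∀ p : V × V, 0 ≤
      Set.indicator {p : V × V | p.1 ≠ p.2 ∧ z ∈ γ p.1 p.2 '' Set.Iic (m p.1 p.2)}
        (fun p => (m p.1 p.2 : ℝ) * w p.1 * w p.2) p :=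
    fun z p => Set.indicator_nonneg
      (fun q _ => mul_nonneg (mul_nonneg (Nat.cast_nonneg _) (hwnn _)) (hwnn _)) _
  have htz : ∀ z, ∑' p : V × V,
      Set.indicator {p : V × V | p.1 ≠ p.2 ∧ z ∈ γ p.1 p.2 '' Set.Iic (m p.1 p.2)}
        (fun p => (m p.1 p.2 : ℝ) * w p.1 * w p.2) p * gradsq z
      = 2 * (barw z * gradsq z) := by
    intro z
    rw [tsum_mul_right, hbarw z]
    ring
  have hHnn : ∀ q : V × (V × V), 0 ≤
      Set.indicator {p : V × V | p.1 ≠ p.2 ∧ q.1 ∈ γ p.1 p.2 '' Set.Iic (m p.1 p.2)}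
        (fun p => (m p.1 p.2 : ℝ) * w p.1 * w p.2) q.2 * gradsq q.1 :=
    fun q => mul_nonneg (hMnn q.1 q.2) (hgradnn q.1)
  have hH : Summable (fun q : V × (V × V) =>
      Set.indicator {p : V × V | p.1 ≠ p.2 ∧ q.1 ∈ γ p.1 p.2 '' Set.Iic (m p.1 p.2)}
        (fun p => (m p.1 p.2 : ℝ) * w p.1 * w p.2) q.2 * gradsq q.1) := by
    apply (summable_prod_of_nonneg hHnn).mpr
    constructor
    · exact hHz
    · exact ((hrhs.mul_left 2).congr (fun z => (htz z).symm))
  have hHswap : Summable (fun q : (V × V) × V =>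
      Set.indicator {p : V × V | p.1 ≠ p.2 ∧ q.2 ∈ γ p.1 p.2 '' Set.Iic (m p.1 p.2)}
        (fun p => (m p.1 p.2 : ℝ) * w p.1 * w p.2) q.1 * gradsq q.2) := hH.prod_symm
  have hB : Summable (fun p : V × V => ∑' z,
      Set.indicator {p : V × V | p.1 ≠ p.2 ∧ z ∈ γ p.1 p.2 '' Set.Iic (m p.1 p.2)}
        (fun p => (m p.1 p.2 : ℝ) * w p.1 * w p.2) p * gradsq z) :=
    ((summable_prod_of_nonneg (fun q => hHnn (q.2, q.1))).mp hHswap).2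
  have hper : ∀ p : V × V, Summable (fun z =>
      Set.indicator {p : V × V | p.1 ≠ p.2 ∧ z ∈ γ p.1 p.2 '' Set.Iic (m p.1 p.2)}
        (fun p => (m p.1 p.2 : ℝ) * w p.1 * w p.2) p * gradsq z) :=
    ((summable_prod_of_nonneg (fun q => hHnn (q.2, q.1))).mp hHswap).1
  have hcomm : ∑' z, ∑' p : V × V,
      Set.indicator {p : V × V | p.1 ≠ p.2 ∧ z ∈ γ p.1 p.2 '' Set.Iic (m p.1 p.2)}
        (fun p => (m p.1 p.2 : ℝ) * w p.1 * w p.2) p * gradsq z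
      = ∑' p : V × V, ∑' z,
      Set.indicator {p : V × V | p.1 ≠ p.2 ∧ z ∈ γ p.1 p.2 '' Set.Iic (m p.1 p.2)}
        (fun p => (m p.1 p.2 : ℝ) * w p.1 * w p.2) p * gradsq z :=
    Summable.tsum_comm' hHswap hper hHz
  have hR : ∑' z, barw z * gradsq z = (1 / 2) * ∑' p : V × V, ∑' z,
      Set.indicator {p : V × V | p.1 ≠ p.2 ∧ z ∈ γ p.1 p.2 '' Set.Iic (m p.1 p.2)}
        (fun p => (m p.1 p.2 : ℝ) * w p.1 * w p.2) p * gradsq z := by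
    rw [← hcomm, ← tsum_mul_left]
    apply tsum_congr
    intro z
    rw [htz z]
    ring
  -- evaluate the inner sum for a fixed pair and compare with the quadratic form
  have hkey : ∀ p : V × V, w p.1 * w p.2 * ‖u p.1 - u p.2‖ ^ 2 ≤ ∑' z,
      Set.indicator {p : V × V | p.1 ≠ p.2 ∧ z ∈ γ p.1 p.2 '' Set.Iic (m p.1 p.2)}
        (fun p => (m p.1 p.2 : ℝ) * w p.1 * w p.2) p * gradsq z := by
    intro p
    by_cases hp : p.1 = p.2
    · have h0 : u p.1 - u p.2 = 0 := by rw [hp, sub_self]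
      rw [h0]
      calc w p.1 * w p.2 * ‖(0 : ℂ)‖ ^ 2 = 0 := by simp
        _ ≤ _ := tsum_nonneg (fun z => mul_nonneg (hMnn z p) (hgradnn z))
    · -- evaluate the tsum as a finite sum over the image of the path
      have hmem : ∀ z : V, z ∈ (Finset.Iic (m p.1 p.2)).image (γ p.1 p.2)
          ↔ z ∈ γ p.1 p.2 '' Set.Iic (m p.1 p.2) := by
        intro z
        simp [Set.mem_image, Finset.mem_image]
      have heval : ∑' z,
          Set.indicator {p : V × V | p.1 ≠ p.2 ∧ z ∈ γ p.1 p.2 '' Set.Iic (m p.1 p.2)}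
            (fun p => (m p.1 p.2 : ℝ) * w p.1 * w p.2) p * gradsq z
          = ((m p.1 p.2 : ℝ) * w p.1 * w p.2) *
            ∑ z ∈ (Finset.Iic (m p.1 p.2)).image (γ p.1 p.2), gradsq z := by
        rw [tsum_eq_sum (s := (Finset.Iic (m p.1 p.2)).image (γ p.1 p.2))
          (by
            intro z hz
            rw [Set.indicator_of_notMem, zero_mul]
            intro hc
            exact hz ((hmem z).mpr hc.2))]
        rw [Finset.mul_sum]
        apply Finset.sum_congr rfl
        intro z hz
        rw [Set.indicator_of_mem (show p ∈ {p : V × V | p.1 ≠ p.2 ∧ z ∈ γ p.1 p.2 '' Set.Iic (m p.1 p.2)} from ⟨hp, (hmem z).mp hz⟩)]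
      rw [heval]
      have hwalk := walk_bound E u gradsq hgradnn hstep (m p.1 p.2) (γ p.1 p.2)
        (fun i hi => hγE p.1 p.2 hp i hi)
      rw [hγ0 p.1 p.2 hp, hγend p.1 p.2 hp] at hwalk
      calc w p.1 * w p.2 * ‖u p.1 - u p.2‖ ^ 2
          ≤ w p.1 * w p.2 * ((m p.1 p.2 : ℝ) *
              ∑ z ∈ (Finset.Iic (m p.1 p.2)).image (γ p.1 p.2), gradsq z) :=
            mul_le_mul_of_nonneg_left hwalk (mul_nonneg (hwnn _) (hwnn _))
        _ = ((m p.1 p.2 : ℝ) * w p.1 * w p.2) *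
              ∑ z ∈ (Finset.Iic (m p.1 p.2)).image (γ p.1 p.2), gradsq z := by ring
  -- put everything together
  have hfinal : 2 * (∑' x, w x * ‖u x‖ ^ 2) ≤ 2 * ∑' z, barw z * gradsq z := by
    rw [← hAsum]
    have h := Summable.tsum_le_tsum hkey hA hB
    rw [hR]
    linarith
  linarith
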